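/- In the geometric block model G_n(r_s, r_d) with 0 ≤ r_d ≤ r_s ≤ 1/4, define for each ordered triple (i,j,k) of pairwise distinct vertices the centered 2-path variable P̄_{ijk} = A_ij A_jk − E[A_ij A_jk]. If (i,j,k) and (i₁,j₁,k₁) are two ordered triples of pairwise distinct vertices whose underlying vertex sets {i,j,k} and {i₁,j₁,k₁} have at most one element in common, then E[P̄_{ijk} · P̄_{i₁j₁k₁}] = 0. -/

import Mathlib

open MeasureTheory Finset

noncomputable section

/-- The periodic distance on `[0,1]`: `d(u,v) = min(|u-v|, 1-|u-v|)`. -/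
def pdist (u v : ℝ) : ℝ := min |u - v| (1 - |u - v|)

/-- The law of `(X_1, …, X_n)`: the product of `n` uniform measures on `[0,1]`. -/
def gbmMeasure (n : ℕ) : Measure (Fin n → ℝ) :=
  Measure.pi fun _ => volume.restrict (Set.Icc (0 : ℝ) 1)

/-- The adjacency matrix of the geometric block model `G_n(r_s, r_d)` with
communities `V₁ = {0,…,m-1}` and `V₂ = {m,…,n-1}`: `A i i = 0`, and for `i ≠ j`,
`A i j = 1[d(X_i,X_j) ≤ r_s]` if `i, j` are in the same community and
`A i j = 1[d(X_i,X_j) ≤ r_d]` otherwise. -/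
def gbmA (n m : ℕ) (rs rd : ℝ) (X : Fin n → ℝ) (i j : Fin n) : ℝ :=
  if i = j then 0
  else if ((i : ℕ) < m ↔ (j : ℕ) < m) then
    (if pdist (X i) (X j) ≤ rs then 1 else 0)
  else (if pdist (X i) (X j) ≤ rd then 1 else 0)

abbrev μ01 : Measure ℝ := volume.restrict (Set.Icc (0:ℝ) 1)
instance : IsProbabilityMeasure μ01 := ⟨by simp [Real.volume_Icc]⟩

def ee (r x y : ℝ) : ℝ := if pdist x y ≤ r then 1 else 0

lemma measurable_pdist : Measurable fun p : ℝ × ℝ => pdist p.1 p.2 := by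
  unfold pdist; fun_prop

lemma measurable_ee (r : ℝ) : Measurable fun p : ℝ × ℝ => ee r p.1 p.2 := by
  unfold ee
  exact Measurable.ite (measurableSet_le measurable_pdist measurable_const)
    measurable_const measurable_const

lemma ee_abs_le (r x y : ℝ) : |ee r x y| ≤ 1 := by unfold ee; split <;> simp

lemma pdist_comm (x y : ℝ) : pdist x y = pdist y x := by unfold pdist; rw [abs_sub_comm]

lemma ee_comm (r x y : ℝ) : ee r x y = ee r y x := by unfold ee; rw [pdist_comm]

lemma integral_ee {r : ℝ} (hr0 : 0 ≤ r) (hr : r ≤ 1/4) {x : ℝ} (hx : x ∈ Set.Icc (0:ℝ) 1) :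
    ∫ y, ee r x y ∂μ01 = 2 * r := by
  obtain ⟨hx0, hx1⟩ := hx
  have hA : MeasurableSet {y : ℝ | pdist x y ≤ r} :=
    measurableSet_le (measurable_pdist.comp (measurable_const.prodMk measurable_id))
      measurable_const
  have h1 : ∀ y, ee r x y = Set.indicator {y : ℝ | pdist x y ≤ r} (fun _ => (1:ℝ)) y := by
    intro y; simp [ee, Set.indicator_apply]
  simp_rw [h1]
  rw [integral_indicator_const (1:ℝ) hA, smul_eq_mul, mul_one, measureReal_def, Measure.restrict_apply hA]
  have hmem : ∀ y, pdist x y ≤ r ↔ (|x - y| ≤ r ∨ 1 - r ≤ |x - y|) := by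
    intro y; unfold pdist; rw [min_le_iff]
    apply or_congr Iff.rfl
    constructor <;> intro <;> linarith
  rcases le_or_gt x r with hxr | hxr
  · -- x ≤ r : set is Icc 0 (x+r) ∪ Icc (x+1-r) 1
    have hset : {y : ℝ | pdist x y ≤ r} ∩ Set.Icc 0 1
        = Set.Icc (0:ℝ) (x + r) ∪ Set.Icc (x + 1 - r) 1 := by
      ext y
      simp only [Set.mem_inter_iff, Set.mem_setOf_eq, Set.mem_Icc, Set.mem_union, hmem]
      constructor
      · rintro ⟨h | h, hy0, hy1⟩
        · rcases abs_le.1 h with ⟨ha, hb⟩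
          exact Or.inl ⟨hy0, by linarith⟩
        · rcases abs_cases (x - y) with ⟨he, _⟩ | ⟨he, _⟩ <;> rw [he] at h
          · exfalso; linarith
          · exact Or.inr ⟨by linarith, hy1⟩
      · rintro (⟨h0, h1'⟩ | ⟨h0, h1'⟩)
        · exact ⟨Or.inl (abs_le.2 ⟨by linarith, by linarith⟩), h0, by linarith⟩
        · refine ⟨Or.inr ?_, by linarith, h1'⟩
          calc 1 - r ≤ y - x := by linarith
            _ ≤ |x - y| := by rw [abs_sub_comm]; exact le_abs_self _
    rw [hset, measure_union ?_ measurableSet_Icc]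
    · rw [Real.volume_Icc, Real.volume_Icc,
        ENNReal.toReal_add ENNReal.ofReal_ne_top ENNReal.ofReal_ne_top,
        ENNReal.toReal_ofReal (by linarith), ENNReal.toReal_ofReal (by linarith)]
      ring
    · refine Set.disjoint_left.2 fun y hy hy' => ?_
      rw [Set.mem_Icc] at hy hy'
      linarith [hy.2, hy'.1]
  rcases le_or_gt (1 - r) x with hxr' | hxr'
  · -- 1 - r ≤ x : set is Icc 0 (x+r-1) ∪ Icc (x-r) 1
    have hset : {y : ℝ | pdist x y ≤ r} ∩ Set.Icc 0 1
        = Set.Icc (0:ℝ) (x + r - 1) ∪ Set.Icc (x - r) 1 := by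
      ext y
      simp only [Set.mem_inter_iff, Set.mem_setOf_eq, Set.mem_Icc, Set.mem_union, hmem]
      constructor
      · rintro ⟨h | h, hy0, hy1⟩
        · rcases abs_le.1 h with ⟨ha, hb⟩
          exact Or.inr ⟨by linarith, hy1⟩
        · rcases abs_cases (x - y) with ⟨he, _⟩ | ⟨he, _⟩ <;> rw [he] at h
          · exact Or.inl ⟨hy0, by linarith⟩
          · exfalso; linarith
      · rintro (⟨h0, h1'⟩ | ⟨h0, h1'⟩)
        · refine ⟨Or.inr ?_, h0, by linarith⟩
          calc 1 - r ≤ x - y := by linarith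
            _ ≤ |x - y| := le_abs_self _
        · exact ⟨Or.inl (abs_le.2 ⟨by linarith, by linarith⟩), by linarith, h1'⟩
    rw [hset, measure_union ?_ measurableSet_Icc]
    · rw [Real.volume_Icc, Real.volume_Icc,
        ENNReal.toReal_add ENNReal.ofReal_ne_top ENNReal.ofReal_ne_top,
        ENNReal.toReal_ofReal (by linarith), ENNReal.toReal_ofReal (by linarith)]
      ring
    · refine Set.disjoint_left.2 fun y hy hy' => ?_
      rw [Set.mem_Icc] at hy hy'
      linarith [hy.2, hy'.1]
  · -- middle case
    have hset : {y : ℝ | pdist x y ≤ r} ∩ Set.Icc 0 1 = Set.Icc (x - r) (x + r) := by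
      ext y
      simp only [Set.mem_inter_iff, Set.mem_setOf_eq, Set.mem_Icc, hmem]
      constructor
      · rintro ⟨h | h, hy0, hy1⟩
        · rcases abs_le.1 h with ⟨ha, hb⟩
          exact ⟨by linarith, by linarith⟩
        · exfalso
          rcases abs_cases (x - y) with ⟨he, _⟩ | ⟨he, _⟩ <;> rw [he] at h <;> linarith
      · rintro ⟨h1', h2'⟩
        exact ⟨Or.inl (abs_le.2 ⟨by linarith, by linarith⟩), by linarith, by linarith⟩
    rw [hset, Real.volume_Icc, ENNReal.toReal_ofReal (by linarith)]
    ring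

lemma integral_ee' {r : ℝ} (hr0 : 0 ≤ r) (hr : r ≤ 1/4) {x : ℝ} (hx : x ∈ Set.Icc (0:ℝ) 1) :
    ∫ y, ee r y x ∂μ01 = 2 * r := by
  simp_rw [fun y => ee_comm r y x]
  exact integral_ee hr0 hr hx

instance gbm_prob (n : ℕ) : IsProbabilityMeasure (gbmMeasure n) := by
  unfold gbmMeasure; infer_instance
lemma integrable_of_bdd {α : Type*} [MeasurableSpace α] {μ : Measure α} [IsFiniteMeasure μ]
    {f : α → ℝ} (hm : Measurable f) (hb : ∀ x, |f x| ≤ 1) : Integrable f μ :=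
  Integrable.mono' (integrable_const 1) hm.aestronglyMeasurable
    (Filter.Eventually.of_forall fun x => by simpa using hb x)

lemma mp_comp {p n : ℕ} {κ : Fin p → Fin n} (hκ : Function.Injective κ) :
    MeasurePreserving (fun X : Fin n → ℝ => X ∘ κ) (gbmMeasure n) (gbmMeasure p) := by
  have hmeas : Measurable fun X : Fin n → ℝ => X ∘ κ :=
    measurable_pi_lambda _ fun t => measurable_pi_apply (κ t)
  refine ⟨hmeas, ?_⟩
  show Measure.map _ _ = Measure.pi _
  refine (Measure.pi_eq fun s hs => ?_).symm
  rw [Measure.map_apply hmeas (MeasurableSet.univ_pi hs)]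
  have hpre : (fun X : Fin n → ℝ => X ∘ κ) ⁻¹' (Set.pi Set.univ s)
      = Set.pi Set.univ (fun i => ⋂ t ∈ {t | κ t = i}, s t) := by
    ext X
    simp only [Set.mem_preimage, Set.mem_pi, Set.mem_univ, forall_true_left, Function.comp,
      Set.mem_iInter, Set.mem_setOf_eq]
    constructor
    · rintro h i t rfl; exact h t
    · intro h t; exact h (κ t) t rfl
  rw [hpre]
  show (Measure.pi fun _ => μ01) _ = _
  rw [Measure.pi_pi]
  have h1 : ∀ t : Fin p, (⋂ t' ∈ {t' | κ t' = κ t}, s t') = s t := by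
    intro t
    apply subset_antisymm
    · intro y hy
      simp only [Set.mem_iInter, Set.mem_setOf_eq] at hy
      exact hy t rfl
    · intro y hy
      simp only [Set.mem_iInter, Set.mem_setOf_eq]
      rintro t' ht'
      rwa [hκ ht']
  calc (∏ i : Fin n, μ01 (⋂ t ∈ {t | κ t = i}, s t))
      = ∏ i ∈ Finset.image κ Finset.univ, μ01 (⋂ t ∈ {t | κ t = i}, s t) := by
        refine (Finset.prod_subset (Finset.subset_univ _) fun i _ hi => ?_).symm
        have : (⋂ t ∈ {t | κ t = i}, s t) = Set.univ := by
          ext y; simp only [Set.mem_iInter, Set.mem_setOf_eq, Set.mem_univ, iff_true]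
          rintro t rfl
          exact absurd (Finset.mem_image.2 ⟨t, Finset.mem_univ t, rfl⟩) hi
        rw [this, measure_univ]
    _ = ∏ t : Fin p, μ01 (⋂ t' ∈ {t' | κ t' = κ t}, s t') :=
        Finset.prod_image fun a _ b _ h => hκ h
    _ = ∏ t : Fin p, μ01 (s t) := by simp_rw [h1]

lemma integral_comp_inj {p n : ℕ} {κ : Fin p → Fin n} (hκ : Function.Injective κ)
    {φ : (Fin p → ℝ) → ℝ} (hφ : Measurable φ) :
    ∫ X, φ (X ∘ κ) ∂gbmMeasure n = ∫ Y, φ Y ∂gbmMeasure p := by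
  conv_rhs => rw [← (mp_comp hκ).map_eq]
  exact (integral_map (mp_comp hκ).measurable.aemeasurable hφ.aestronglyMeasurable).symm

lemma integral_peel {p : ℕ} {h : (Fin (p+1) → ℝ) → ℝ} (hm : Measurable h)
    (hb : ∀ X, |h X| ≤ 1) :
    ∫ X, h X ∂gbmMeasure (p+1) = ∫ x, ∫ Y, h (Fin.cons x Y) ∂gbmMeasure p ∂μ01 := by
  have hmp := measurePreserving_piFinSuccAbove (fun _ : Fin (p+1) => μ01) 0
  have hcons : ∀ (z : ℝ × (Fin p → ℝ)),
      (MeasurableEquiv.piFinSuccAbove (fun _ : Fin (p+1) => ℝ) 0).symm z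
        = Fin.cons z.1 z.2 := by
    intro z; simp [Fin.consEquiv]
  calc ∫ X, h X ∂gbmMeasure (p+1)
      = ∫ z : ℝ × (Fin p → ℝ),
          h ((MeasurableEquiv.piFinSuccAbove (fun _ : Fin (p+1) => ℝ) 0).symm z)
          ∂(μ01.prod (gbmMeasure p)) := ((hmp.symm _).integral_comp' h).symm
    _ = ∫ z : ℝ × (Fin p → ℝ), h (Fin.cons z.1 z.2) ∂(μ01.prod (gbmMeasure p)) := by
        simp_rw [hcons]
    _ = ∫ x, ∫ Y, h (Fin.cons x Y) ∂gbmMeasure p ∂μ01 := by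
        apply integral_prod
        apply integrable_of_bdd ?_ (fun z => hb _)
        have : Measurable fun z : ℝ × (Fin p → ℝ) => (Fin.cons z.1 z.2 : Fin (p+1) → ℝ) :=
          measurable_pi_lambda _ fun t => Fin.cases measurable_fst
            (fun s => (measurable_pi_apply s).comp measurable_snd) t
        exact hm.comp this

lemma abs_mul_le_one {a b : ℝ} (ha : |a| ≤ 1) (hb : |b| ≤ 1) : |a * b| ≤ 1 := by
  rw [abs_mul]
  calc |a| * |b| ≤ 1 * 1 := mul_le_mul ha hb (abs_nonneg _) zero_le_one
    _ = 1 := one_mul 1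

lemma integral_ae_const {f : ℝ → ℝ} {c : ℝ} (h : ∀ x ∈ Set.Icc (0:ℝ) 1, f x = c) :
    ∫ x, f x ∂μ01 = c := by
  rw [integral_congr_ae ((ae_restrict_mem measurableSet_Icc).mono h), integral_const,
    probReal_univ, one_smul]

section slices
variable {r1 r2 : ℝ} (hr10 : 0 ≤ r1) (hr1 : r1 ≤ 1/4) (hr20 : 0 ≤ r2) (hr2 : r2 ≤ 1/4)
  {x : ℝ} (hx : x ∈ Set.Icc (0:ℝ) 1)

include hr10 hr1 hr20 hr2 hx

lemma slice1 : ∫ y, ∫ z, ee r1 x y * ee r2 y z ∂μ01 ∂μ01 = (2*r1) * (2*r2) := by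
  have hz : ∀ y, ∫ z, ee r1 x y * ee r2 y z ∂μ01 = ee r1 x y * ∫ z, ee r2 y z ∂μ01 :=
    fun y => integral_const_mul _ _
  simp_rw [hz]
  have hae : ∀ᵐ y ∂μ01, ee r1 x y * (∫ z, ee r2 y z ∂μ01) = ee r1 x y * (2*r2) :=
    (ae_restrict_mem measurableSet_Icc).mono fun y hy => by rw [integral_ee hr20 hr2 hy]
  rw [integral_congr_ae hae, integral_mul_const, integral_ee hr10 hr1 hx]

lemma slice2 : ∫ y, ∫ z, ee r1 y x * ee r2 x z ∂μ01 ∂μ01 = (2*r1) * (2*r2) := by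
  have hz : ∀ y, ∫ z, ee r1 y x * ee r2 x z ∂μ01 = ee r1 y x * (2*r2) :=
    fun y => by rw [integral_const_mul, integral_ee hr20 hr2 hx]
  simp_rw [hz]
  rw [integral_mul_const, integral_ee' hr10 hr1 hx]

lemma slice3 : ∫ y, ∫ z, ee r1 y z * ee r2 z x ∂μ01 ∂μ01 = (2*r1) * (2*r2) := by
  rw [integral_integral_swap]
  · have hy : ∀ z, ∫ y, ee r1 y z * ee r2 z x ∂μ01 = (∫ y, ee r1 y z ∂μ01) * ee r2 z x :=
      fun z => integral_mul_const _ _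
    simp_rw [hy]
    have hae : ∀ᵐ z ∂μ01, (∫ y, ee r1 y z ∂μ01) * ee r2 z x = (2*r1) * ee r2 z x :=
      (ae_restrict_mem measurableSet_Icc).mono fun z hz => by rw [integral_ee' hr10 hr1 hz]
    rw [integral_congr_ae hae, integral_const_mul, integral_ee' hr20 hr2 hx]
  · apply integrable_of_bdd
    · exact ((measurable_ee r1).comp (measurable_fst.prodMk measurable_snd)).mul
        ((measurable_ee r2).comp (measurable_snd.prodMk measurable_const))
    · exact fun q => abs_mul_le_one (ee_abs_le _ _ _) (ee_abs_le _ _ _)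

end slices

lemma integral_gbm2 {H : ℝ → ℝ → ℝ} (hm : Measurable fun q : ℝ × ℝ => H q.1 q.2)
    (hb : ∀ a b, |H a b| ≤ 1) :
    ∫ Y, H (Y 0) (Y 1) ∂gbmMeasure 2 = ∫ y, ∫ z, H y z ∂μ01 ∂μ01 := by
  have hm2 : Measurable fun Y : Fin 2 → ℝ => H (Y 0) (Y 1) :=
    hm.comp (f := fun Y : Fin 2 → ℝ => (Y 0, Y 1))
      ((measurable_pi_apply 0).prodMk (measurable_pi_apply 1))
  rw [integral_peel hm2 (fun X => hb _ _)]
  have key : ∀ x : ℝ, (∫ Y : Fin 1 → ℝ, H ((Fin.cons x Y : Fin 2 → ℝ) 0)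
      ((Fin.cons x Y : Fin 2 → ℝ) 1) ∂gbmMeasure 1) = ∫ z, H x z ∂μ01 := by
    intro x
    have h0 : ∀ Y : Fin 1 → ℝ, H ((Fin.cons x Y : Fin 2 → ℝ) 0) ((Fin.cons x Y : Fin 2 → ℝ) 1)
        = H x (Y 0) := fun _ => rfl
    simp_rw [h0]
    have hm1 : Measurable fun Y : Fin 1 → ℝ => H x (Y 0) :=
      hm.comp (measurable_const.prodMk (measurable_pi_apply 0))
    rw [integral_peel hm1 (fun X => hb _ _)]
    have h1 : ∀ (z : ℝ) (W : Fin 0 → ℝ), H x ((Fin.cons z W : Fin 1 → ℝ) 0) = H x z :=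
      fun _ _ => rfl
    simp_rw [h1, integral_const, probReal_univ, one_smul]
  simp_rw [key]

lemma integral_gbm3 {F : ℝ → ℝ → ℝ → ℝ}
    (hm : Measurable fun q : ℝ × ℝ × ℝ => F q.1 q.2.1 q.2.2)
    (hb : ∀ x y z, |F x y z| ≤ 1) {c : ℝ}
    (hF : ∀ x ∈ Set.Icc (0:ℝ) 1, ∫ y, ∫ z, F x y z ∂μ01 ∂μ01 = c) :
    ∫ Y, F (Y 0) (Y 1) (Y 2) ∂gbmMeasure 3 = c := by
  have hm3 : Measurable fun Y : Fin 3 → ℝ => F (Y 0) (Y 1) (Y 2) :=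
    hm.comp (f := fun Y : Fin 3 → ℝ => (Y 0, Y 1, Y 2))
      ((measurable_pi_apply 0).prodMk
      ((measurable_pi_apply 1).prodMk (measurable_pi_apply 2)))
  rw [integral_peel hm3 (fun X => hb _ _ _)]
  have key : ∀ x : ℝ, (∫ Y : Fin 2 → ℝ, F ((Fin.cons x Y : Fin 3 → ℝ) 0)
      ((Fin.cons x Y : Fin 3 → ℝ) 1) ((Fin.cons x Y : Fin 3 → ℝ) 2) ∂gbmMeasure 2)
      = ∫ y, ∫ z, F x y z ∂μ01 ∂μ01 := by
    intro x
    have h0 : ∀ Y : Fin 2 → ℝ, F ((Fin.cons x Y : Fin 3 → ℝ) 0) ((Fin.cons x Y : Fin 3 → ℝ) 1)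
        ((Fin.cons x Y : Fin 3 → ℝ) 2) = F x (Y 0) (Y 1) := fun _ => rfl
    simp_rw [h0]
    exact integral_gbm2 (hm.comp (f := fun q : ℝ × ℝ => (x, q))
      (measurable_const.prodMk measurable_id)) (fun a b => hb x a b)
  simp_rw [key]
  exact integral_ae_const hF

lemma integral_gbm4_pair {A B : ℝ → ℝ → ℝ}
    (hmA : Measurable fun q : ℝ × ℝ => A q.1 q.2) (hmB : Measurable fun q : ℝ × ℝ => B q.1 q.2)
    (hbA : ∀ a b, |A a b| ≤ 1) (hbB : ∀ a b, |B a b| ≤ 1) :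
    ∫ Z, A (Z 0) (Z 1) * B (Z 2) (Z 3) ∂gbmMeasure 4
      = (∫ y, ∫ z, A y z ∂μ01 ∂μ01) * (∫ y, ∫ z, B y z ∂μ01 ∂μ01) := by
  have hm4 : Measurable fun Z : Fin 4 → ℝ => A (Z 0) (Z 1) * B (Z 2) (Z 3) :=
    (hmA.comp (f := fun Z : Fin 4 → ℝ => (Z 0, Z 1))
        ((measurable_pi_apply 0).prodMk (measurable_pi_apply 1))).mul
      (hmB.comp (f := fun Z : Fin 4 → ℝ => (Z 2, Z 3))
        ((measurable_pi_apply 2).prodMk (measurable_pi_apply 3)))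
  rw [integral_peel hm4 (fun X => abs_mul_le_one (hbA _ _) (hbB _ _))]
  have h0 : ∀ (a : ℝ) (Z : Fin 3 → ℝ),
      A ((Fin.cons a Z : Fin 4 → ℝ) 0) ((Fin.cons a Z : Fin 4 → ℝ) 1)
        * B ((Fin.cons a Z : Fin 4 → ℝ) 2) ((Fin.cons a Z : Fin 4 → ℝ) 3)
      = A a (Z 0) * B (Z 1) (Z 2) := fun _ _ => rfl
  simp_rw [h0]
  have k1 : ∀ a : ℝ, (∫ Z : Fin 3 → ℝ, A a (Z 0) * B (Z 1) (Z 2) ∂gbmMeasure 3)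
      = (∫ b, A a b ∂μ01) * (∫ y, ∫ z, B y z ∂μ01 ∂μ01) := by
    intro a
    have hm3 : Measurable fun Z : Fin 3 → ℝ => A a (Z 0) * B (Z 1) (Z 2) :=
      (hmA.comp (f := fun Z : Fin 3 → ℝ => (a, Z 0))
          (measurable_const.prodMk (measurable_pi_apply 0))).mul
        (hmB.comp (f := fun Z : Fin 3 → ℝ => (Z 1, Z 2))
          ((measurable_pi_apply 1).prodMk (measurable_pi_apply 2)))
    rw [integral_peel hm3 (fun X => abs_mul_le_one (hbA _ _) (hbB _ _))]
    have h1 : ∀ (b : ℝ) (Z : Fin 2 → ℝ),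
        A a ((Fin.cons b Z : Fin 3 → ℝ) 0)
          * B ((Fin.cons b Z : Fin 3 → ℝ) 1) ((Fin.cons b Z : Fin 3 → ℝ) 2)
        = A a b * B (Z 0) (Z 1) := fun _ _ => rfl
    simp_rw [h1]
    have k2 : ∀ b : ℝ, (∫ Z : Fin 2 → ℝ, A a b * B (Z 0) (Z 1) ∂gbmMeasure 2)
        = A a b * (∫ y, ∫ z, B y z ∂μ01 ∂μ01) := by
      intro b
      rw [integral_const_mul, integral_gbm2 hmB hbB]
    simp_rw [k2, integral_mul_const]
  simp_rw [k1, integral_mul_const]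

lemma inj3 {n : ℕ} {v a b : Fin n} (h1 : v ≠ a) (h2 : v ≠ b) (h3 : a ≠ b) :
    Function.Injective ![v, a, b] := by
  intro s t h; fin_cases s <;> fin_cases t <;>
    first | rfl | exact absurd h (by assumption) | exact absurd h.symm (by assumption)

lemma inj5 {n : ℕ} {v a b c d : Fin n} (h1 : v ≠ a) (h2 : v ≠ b) (h3 : v ≠ c) (h4 : v ≠ d)
    (h5 : a ≠ b) (h6 : a ≠ c) (h7 : a ≠ d) (h8 : b ≠ c) (h9 : b ≠ d) (h10 : c ≠ d) :
    Function.Injective ![v, a, b, c, d] := by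
  intro s t h; fin_cases s <;> fin_cases t <;>
    first | rfl | exact absurd h (by assumption) | exact absurd h.symm (by assumption)

lemma inj6 {n : ℕ} {u a b u' a' b' : Fin n} (h1 : u ≠ a) (h2 : u ≠ b) (h3 : u ≠ u')
    (h4 : u ≠ a') (h5 : u ≠ b') (h6 : a ≠ b) (h7 : a ≠ u') (h8 : a ≠ a') (h9 : a ≠ b')
    (h10 : b ≠ u') (h11 : b ≠ a') (h12 : b ≠ b') (h13 : u' ≠ a') (h14 : u' ≠ b')
    (h15 : a' ≠ b') : Function.Injective ![u, a, b, u', a', b'] := by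
  intro s t h; fin_cases s <;> fin_cases t <;>
    first | rfl | exact absurd h (by assumption) | exact absurd h.symm (by assumption)

lemma ML_single {n : ℕ} {v a b : Fin n} (h1 : v ≠ a) (h2 : v ≠ b) (h3 : a ≠ b)
    (F : ℝ → ℝ → ℝ → ℝ) (hm : Measurable fun q : ℝ × ℝ × ℝ => F q.1 q.2.1 q.2.2)
    (hb : ∀ x y z, |F x y z| ≤ 1) {c : ℝ}
    (hF : ∀ x ∈ Set.Icc (0:ℝ) 1, ∫ y, ∫ z, F x y z ∂μ01 ∂μ01 = c) :
    ∫ X, F (X v) (X a) (X b) ∂gbmMeasure n = c := by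
  have hm3 : Measurable fun Y : Fin 3 → ℝ => F (Y 0) (Y 1) (Y 2) :=
    hm.comp (f := fun Y : Fin 3 → ℝ => (Y 0, Y 1, Y 2))
      ((measurable_pi_apply 0).prodMk ((measurable_pi_apply 1).prodMk (measurable_pi_apply 2)))
  have h' : ∫ X, F (X v) (X a) (X b) ∂gbmMeasure n
      = ∫ Y, F (Y 0) (Y 1) (Y 2) ∂gbmMeasure 3 := integral_comp_inj (inj3 h1 h2 h3) hm3
  rw [h']
  exact integral_gbm3 hm hb hF

lemma ML_pair5 {n : ℕ} {v a b a' b' : Fin n}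
    (h1 : v ≠ a) (h2 : v ≠ b) (h3 : v ≠ a') (h4 : v ≠ b') (h5 : a ≠ b) (h6 : a ≠ a')
    (h7 : a ≠ b') (h8 : b ≠ a') (h9 : b ≠ b') (h10 : a' ≠ b')
    (F G : ℝ → ℝ → ℝ → ℝ)
    (hmF : Measurable fun q : ℝ × ℝ × ℝ => F q.1 q.2.1 q.2.2)
    (hmG : Measurable fun q : ℝ × ℝ × ℝ => G q.1 q.2.1 q.2.2)
    (hbF : ∀ x y z, |F x y z| ≤ 1) (hbG : ∀ x y z, |G x y z| ≤ 1) {cF cG : ℝ}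
    (hF : ∀ x ∈ Set.Icc (0:ℝ) 1, ∫ y, ∫ z, F x y z ∂μ01 ∂μ01 = cF)
    (hG : ∀ x ∈ Set.Icc (0:ℝ) 1, ∫ y, ∫ z, G x y z ∂μ01 ∂μ01 = cG) :
    ∫ X, F (X v) (X a) (X b) * G (X v) (X a') (X b') ∂gbmMeasure n = cF * cG := by
  have hm5 : Measurable fun Y : Fin 5 → ℝ => F (Y 0) (Y 1) (Y 2) * G (Y 0) (Y 3) (Y 4) :=
    (hmF.comp (f := fun Y : Fin 5 → ℝ => (Y 0, Y 1, Y 2))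
      ((measurable_pi_apply 0).prodMk
        ((measurable_pi_apply 1).prodMk (measurable_pi_apply 2)))).mul
    (hmG.comp (f := fun Y : Fin 5 → ℝ => (Y 0, Y 3, Y 4))
      ((measurable_pi_apply 0).prodMk
        ((measurable_pi_apply 3).prodMk (measurable_pi_apply 4))))
  have h' : ∫ X, F (X v) (X a) (X b) * G (X v) (X a') (X b') ∂gbmMeasure n
      = ∫ Y, F (Y 0) (Y 1) (Y 2) * G (Y 0) (Y 3) (Y 4) ∂gbmMeasure 5 :=
    integral_comp_inj (inj5 h1 h2 h3 h4 h5 h6 h7 h8 h9 h10) hm5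
  rw [h', integral_peel hm5 (fun X => abs_mul_le_one (hbF _ _ _) (hbG _ _ _))]
  have h0 : ∀ (x : ℝ) (Z : Fin 4 → ℝ),
      F ((Fin.cons x Z : Fin 5 → ℝ) 0) ((Fin.cons x Z : Fin 5 → ℝ) 1)
          ((Fin.cons x Z : Fin 5 → ℝ) 2)
        * G ((Fin.cons x Z : Fin 5 → ℝ) 0) ((Fin.cons x Z : Fin 5 → ℝ) 3)
          ((Fin.cons x Z : Fin 5 → ℝ) 4)
      = F x (Z 0) (Z 1) * G x (Z 2) (Z 3) := fun _ _ => rfl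
  simp_rw [h0]
  refine integral_ae_const fun x hx => ?_
  have hkey := integral_gbm4_pair (A := F x) (B := G x)
    (hmF.comp (f := fun q : ℝ × ℝ => (x, q)) (measurable_const.prodMk measurable_id))
    (hmG.comp (f := fun q : ℝ × ℝ => (x, q)) (measurable_const.prodMk measurable_id))
    (fun a b => hbF x a b) (fun a b => hbG x a b)
  rw [hkey, hF x hx, hG x hx]

lemma ML_pair6 {n : ℕ} {u a b u' a' b' : Fin n} (h1 : u ≠ a) (h2 : u ≠ b) (h3 : u ≠ u')
    (h4 : u ≠ a') (h5 : u ≠ b') (h6 : a ≠ b) (h7 : a ≠ u') (h8 : a ≠ a') (h9 : a ≠ b')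
    (h10 : b ≠ u') (h11 : b ≠ a') (h12 : b ≠ b') (h13 : u' ≠ a') (h14 : u' ≠ b')
    (h15 : a' ≠ b')
    (F G : ℝ → ℝ → ℝ → ℝ)
    (hmF : Measurable fun q : ℝ × ℝ × ℝ => F q.1 q.2.1 q.2.2)
    (hmG : Measurable fun q : ℝ × ℝ × ℝ => G q.1 q.2.1 q.2.2)
    (hbF : ∀ x y z, |F x y z| ≤ 1) (hbG : ∀ x y z, |G x y z| ≤ 1) {cF cG : ℝ}
    (hF : ∀ x ∈ Set.Icc (0:ℝ) 1, ∫ y, ∫ z, F x y z ∂μ01 ∂μ01 = cF)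
    (hG : ∀ x ∈ Set.Icc (0:ℝ) 1, ∫ y, ∫ z, G x y z ∂μ01 ∂μ01 = cG) :
    ∫ X, F (X u) (X a) (X b) * G (X u') (X a') (X b') ∂gbmMeasure n = cF * cG := by
  have hm6 : Measurable fun Y : Fin 6 → ℝ => F (Y 0) (Y 1) (Y 2) * G (Y 3) (Y 4) (Y 5) :=
    (hmF.comp (f := fun Y : Fin 6 → ℝ => (Y 0, Y 1, Y 2))
      ((measurable_pi_apply 0).prodMk
        ((measurable_pi_apply 1).prodMk (measurable_pi_apply 2)))).mul
    (hmG.comp (f := fun Y : Fin 6 → ℝ => (Y 3, Y 4, Y 5))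
      ((measurable_pi_apply 3).prodMk
        ((measurable_pi_apply 4).prodMk (measurable_pi_apply 5))))
  have h' : ∫ X, F (X u) (X a) (X b) * G (X u') (X a') (X b') ∂gbmMeasure n
      = ∫ Y, F (Y 0) (Y 1) (Y 2) * G (Y 3) (Y 4) (Y 5) ∂gbmMeasure 6 :=
    integral_comp_inj (inj6 h1 h2 h3 h4 h5 h6 h7 h8 h9 h10 h11 h12 h13 h14 h15) hm6
  rw [h', integral_peel hm6 (fun X => abs_mul_le_one (hbF _ _ _) (hbG _ _ _))]
  have h0 : ∀ (x : ℝ) (Z : Fin 5 → ℝ),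
      F ((Fin.cons x Z : Fin 6 → ℝ) 0) ((Fin.cons x Z : Fin 6 → ℝ) 1)
          ((Fin.cons x Z : Fin 6 → ℝ) 2)
        * G ((Fin.cons x Z : Fin 6 → ℝ) 3) ((Fin.cons x Z : Fin 6 → ℝ) 4)
          ((Fin.cons x Z : Fin 6 → ℝ) 5)
      = F x (Z 0) (Z 1) * G (Z 2) (Z 3) (Z 4) := fun _ _ => rfl
  simp_rw [h0]
  have k1 : ∀ x : ℝ, (∫ Z : Fin 5 → ℝ, F x (Z 0) (Z 1) * G (Z 2) (Z 3) (Z 4) ∂gbmMeasure 5)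
      = (∫ y, ∫ z, F x y z ∂μ01 ∂μ01) * cG := by
    intro x
    have hm5x : Measurable fun Z : Fin 5 → ℝ => F x (Z 0) (Z 1) * G (Z 2) (Z 3) (Z 4) :=
      (hmF.comp (f := fun Z : Fin 5 → ℝ => (x, Z 0, Z 1))
        (measurable_const.prodMk
          ((measurable_pi_apply 0).prodMk (measurable_pi_apply 1)))).mul
      (hmG.comp (f := fun Z : Fin 5 → ℝ => (Z 2, Z 3, Z 4))
        ((measurable_pi_apply 2).prodMk
          ((measurable_pi_apply 3).prodMk (measurable_pi_apply 4))))
    rw [integral_peel hm5x (fun X => abs_mul_le_one (hbF _ _ _) (hbG _ _ _))]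
    have h1' : ∀ (y : ℝ) (W : Fin 4 → ℝ),
        F x ((Fin.cons y W : Fin 5 → ℝ) 0) ((Fin.cons y W : Fin 5 → ℝ) 1)
          * G ((Fin.cons y W : Fin 5 → ℝ) 2) ((Fin.cons y W : Fin 5 → ℝ) 3)
            ((Fin.cons y W : Fin 5 → ℝ) 4)
        = F x y (W 0) * G (W 1) (W 2) (W 3) := fun _ _ => rfl
    simp_rw [h1']
    have k2 : ∀ y : ℝ, (∫ W : Fin 4 → ℝ, F x y (W 0) * G (W 1) (W 2) (W 3) ∂gbmMeasure 4)
        = (∫ z, F x y z ∂μ01) * cG := by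
      intro y
      have hm4 : Measurable fun W : Fin 4 → ℝ => F x y (W 0) * G (W 1) (W 2) (W 3) :=
        (hmF.comp (f := fun W : Fin 4 → ℝ => (x, y, W 0))
          (measurable_const.prodMk (measurable_const.prodMk (measurable_pi_apply 0)))).mul
        (hmG.comp (f := fun W : Fin 4 → ℝ => (W 1, W 2, W 3))
          ((measurable_pi_apply 1).prodMk
            ((measurable_pi_apply 2).prodMk (measurable_pi_apply 3))))
      rw [integral_peel hm4 (fun X => abs_mul_le_one (hbF _ _ _) (hbG _ _ _))]
      have h2' : ∀ (z : ℝ) (V : Fin 3 → ℝ),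
          F x y ((Fin.cons z V : Fin 4 → ℝ) 0)
            * G ((Fin.cons z V : Fin 4 → ℝ) 1) ((Fin.cons z V : Fin 4 → ℝ) 2)
              ((Fin.cons z V : Fin 4 → ℝ) 3)
          = F x y z * G (V 0) (V 1) (V 2) := fun _ _ => rfl
      simp_rw [h2']
      have k3 : ∀ z : ℝ, (∫ V : Fin 3 → ℝ, F x y z * G (V 0) (V 1) (V 2) ∂gbmMeasure 3)
          = F x y z * cG := fun z => by
        rw [integral_const_mul, integral_gbm3 hmG hbG hG]
      simp_rw [k3, integral_mul_const]
    simp_rw [k2, integral_mul_const]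
  simp_rw [k1]
  refine integral_ae_const fun x hx => by rw [hF x hx]

lemma centered_core {α : Type*} [MeasurableSpace α] {ν : Measure α} [IsProbabilityMeasure ν]
    (f g : α → ℝ) {cf cg : ℝ} (hIf : Integrable f ν) (hIg : Integrable g ν)
    (hIfg : Integrable (fun X => f X * g X) ν)
    (hf : ∫ X, f X ∂ν = cf) (hg : ∫ X, g X ∂ν = cg)
    (hfg : ∫ X, f X * g X ∂ν = cf * cg) :
    ∫ X, (f X - ∫ Y, f Y ∂ν) * (g X - ∫ Y, g Y ∂ν) ∂ν = 0 := by
  rw [hf, hg]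
  have step1 : ∫ X, (f X - cf) * (g X - cg) ∂ν
      = ∫ X, ((f X * g X - cg * f X) - (cf * g X - cf * cg)) ∂ν :=
    integral_congr_ae (Filter.Eventually.of_forall fun X => by ring)
  rw [step1,
    integral_sub (f := fun X => f X * g X - cg * f X) (g := fun X => cf * g X - cf * cg)
      (hIfg.sub (hIf.const_mul cg)) ((hIg.const_mul cf).sub (integrable_const _)),
    integral_sub (f := fun X => f X * g X) (g := fun X => cg * f X) hIfg (hIf.const_mul cg),
    integral_sub (f := fun X => cf * g X) (g := fun X => cf * cg) (hIg.const_mul cf)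
      (integrable_const _),
    integral_const_mul, integral_const_mul, integral_const, hfg, hf, hg, probReal_univ]
  simp only [ENNReal.toReal_one, one_smul]
  ring


def sh1 (r1 r2 x y z : ℝ) : ℝ := ee r1 x y * ee r2 y z
def sh2 (r1 r2 x y z : ℝ) : ℝ := ee r1 y x * ee r2 x z
def sh3 (r1 r2 x y z : ℝ) : ℝ := ee r1 y z * ee r2 z x

lemma msh1 (r1 r2 : ℝ) : Measurable fun q : ℝ × ℝ × ℝ => sh1 r1 r2 q.1 q.2.1 q.2.2 :=
  ((measurable_ee r1).comp (f := fun q : ℝ × ℝ × ℝ => (q.1, q.2.1))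
    (measurable_fst.prodMk (measurable_fst.comp measurable_snd))).mul
  ((measurable_ee r2).comp (f := fun q : ℝ × ℝ × ℝ => (q.2.1, q.2.2))
    ((measurable_fst.comp measurable_snd).prodMk (measurable_snd.comp measurable_snd)))

lemma msh2 (r1 r2 : ℝ) : Measurable fun q : ℝ × ℝ × ℝ => sh2 r1 r2 q.1 q.2.1 q.2.2 :=
  ((measurable_ee r1).comp (f := fun q : ℝ × ℝ × ℝ => (q.2.1, q.1))
    ((measurable_fst.comp measurable_snd).prodMk measurable_fst)).mul
  ((measurable_ee r2).comp (f := fun q : ℝ × ℝ × ℝ => (q.1, q.2.2))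
    (measurable_fst.prodMk (measurable_snd.comp measurable_snd)))

lemma msh3 (r1 r2 : ℝ) : Measurable fun q : ℝ × ℝ × ℝ => sh3 r1 r2 q.1 q.2.1 q.2.2 :=
  ((measurable_ee r1).comp (f := fun q : ℝ × ℝ × ℝ => (q.2.1, q.2.2))
    ((measurable_fst.comp measurable_snd).prodMk (measurable_snd.comp measurable_snd))).mul
  ((measurable_ee r2).comp (f := fun q : ℝ × ℝ × ℝ => (q.2.2, q.1))
    ((measurable_snd.comp measurable_snd).prodMk measurable_fst))

lemma bsh1 (r1 r2 : ℝ) : ∀ x y z, |sh1 r1 r2 x y z| ≤ 1 :=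
  fun _ _ _ => abs_mul_le_one (ee_abs_le _ _ _) (ee_abs_le _ _ _)
lemma bsh2 (r1 r2 : ℝ) : ∀ x y z, |sh2 r1 r2 x y z| ≤ 1 :=
  fun _ _ _ => abs_mul_le_one (ee_abs_le _ _ _) (ee_abs_le _ _ _)
lemma bsh3 (r1 r2 : ℝ) : ∀ x y z, |sh3 r1 r2 x y z| ≤ 1 :=
  fun _ _ _ => abs_mul_le_one (ee_abs_le _ _ _) (ee_abs_le _ _ _)

section sw
variable {r1 r2 : ℝ} (hr10 : 0 ≤ r1) (hr1 : r1 ≤ 1/4) (hr20 : 0 ≤ r2) (hr2 : r2 ≤ 1/4)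
include hr10 hr1 hr20 hr2

lemma slicew1 : ∀ x ∈ Set.Icc (0:ℝ) 1,
    ∫ y, ∫ z, sh1 r1 r2 x y z ∂μ01 ∂μ01 = (2*r1) * (2*r2) :=
  fun _ hx => slice1 hr10 hr1 hr20 hr2 hx
lemma slicew2 : ∀ x ∈ Set.Icc (0:ℝ) 1,
    ∫ y, ∫ z, sh2 r1 r2 x y z ∂μ01 ∂μ01 = (2*r1) * (2*r2) :=
  fun _ hx => slice2 hr10 hr1 hr20 hr2 hx
lemma slicew3 : ∀ x ∈ Set.Icc (0:ℝ) 1,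
    ∫ y, ∫ z, sh3 r1 r2 x y z ∂μ01 ∂μ01 = (2*r1) * (2*r2) :=
  fun _ hx => slice3 hr10 hr1 hr20 hr2 hx
end sw

/-- If two ordered triples of pairwise distinct vertices share at most one vertex,
then the centered 2-path variables `P̄_{ijk} = A_ij A_jk − E[A_ij A_jk]` are
uncorrelated: `E[P̄_{ijk} · P̄_{i₁j₁k₁}] = 0`. -/
theorem centered_two_paths_orthogonal (n : ℕ) (τ : ℝ) (hτ : τ ∈ Set.Icc (0 : ℝ) 1)
    (m : ℕ) (hm : (m : ℝ) = τ * n) (rs rd : ℝ)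
    (hrd0 : 0 ≤ rd) (hds : rd ≤ rs) (hs4 : rs ≤ 1 / 4)
    (i j k i₁ j₁ k₁ : Fin n)
    (hij : i ≠ j) (hik : i ≠ k) (hjk : j ≠ k)
    (hij₁ : i₁ ≠ j₁) (hik₁ : i₁ ≠ k₁) (hjk₁ : j₁ ≠ k₁)
    (hshare : (({i, j, k} : Finset (Fin n)) ∩ ({i₁, j₁, k₁} : Finset (Fin n))).card ≤ 1) :
    (∫ X,
        (gbmA n m rs rd X i j * gbmA n m rs rd X j k
          - ∫ Y, gbmA n m rs rd Y i j * gbmA n m rs rd Y j k ∂gbmMeasure n)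
      * (gbmA n m rs rd X i₁ j₁ * gbmA n m rs rd X j₁ k₁
          - ∫ Y, gbmA n m rs rd Y i₁ j₁ * gbmA n m rs rd Y j₁ k₁ ∂gbmMeasure n)
      ∂gbmMeasure n) = 0 := by
  have hrs0 : 0 ≤ rs := le_trans hrd0 hds
  have hrd4 : rd ≤ 1/4 := le_trans hds hs4
  obtain ⟨r₁, hr₁0, hr₁4, hA1⟩ : ∃ r, 0 ≤ r ∧ r ≤ 1/4 ∧
      ∀ X : Fin n → ℝ, gbmA n m rs rd X i j = ee r (X i) (X j) := by
    refine ⟨if ((i:ℕ) < m ↔ (j:ℕ) < m) then rs else rd, by split <;> linarith,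
      by split <;> linarith, fun X => ?_⟩
    by_cases hc : ((i:ℕ) < m ↔ (j:ℕ) < m) <;> simp [gbmA, ee, if_neg hij, hc]
  obtain ⟨r₂, hr₂0, hr₂4, hA2⟩ : ∃ r, 0 ≤ r ∧ r ≤ 1/4 ∧
      ∀ X : Fin n → ℝ, gbmA n m rs rd X j k = ee r (X j) (X k) := by
    refine ⟨if ((j:ℕ) < m ↔ (k:ℕ) < m) then rs else rd, by split <;> linarith,
      by split <;> linarith, fun X => ?_⟩
    by_cases hc : ((j:ℕ) < m ↔ (k:ℕ) < m) <;> simp [gbmA, ee, if_neg hjk, hc]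
  obtain ⟨r₃, hr₃0, hr₃4, hA3⟩ : ∃ r, 0 ≤ r ∧ r ≤ 1/4 ∧
      ∀ X : Fin n → ℝ, gbmA n m rs rd X i₁ j₁ = ee r (X i₁) (X j₁) := by
    refine ⟨if ((i₁:ℕ) < m ↔ (j₁:ℕ) < m) then rs else rd, by split <;> linarith,
      by split <;> linarith, fun X => ?_⟩
    by_cases hc : ((i₁:ℕ) < m ↔ (j₁:ℕ) < m) <;> simp [gbmA, ee, if_neg hij₁, hc]
  obtain ⟨r₄, hr₄0, hr₄4, hA4⟩ : ∃ r, 0 ≤ r ∧ r ≤ 1/4 ∧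
      ∀ X : Fin n → ℝ, gbmA n m rs rd X j₁ k₁ = ee r (X j₁) (X k₁) := by
    refine ⟨if ((j₁:ℕ) < m ↔ (k₁:ℕ) < m) then rs else rd, by split <;> linarith,
      by split <;> linarith, fun X => ?_⟩
    by_cases hc : ((j₁:ℕ) < m ↔ (k₁:ℕ) < m) <;> simp [gbmA, ee, if_neg hjk₁, hc]
  simp only [hA1, hA2, hA3, hA4]
  have hmf : Measurable fun X : Fin n → ℝ => ee r₁ (X i) (X j) * ee r₂ (X j) (X k) :=
    ((measurable_ee r₁).comp (f := fun X : Fin n → ℝ => (X i, X j))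
      ((measurable_pi_apply i).prodMk (measurable_pi_apply j))).mul
    ((measurable_ee r₂).comp (f := fun X : Fin n → ℝ => (X j, X k))
      ((measurable_pi_apply j).prodMk (measurable_pi_apply k)))
  have hmg : Measurable fun X : Fin n → ℝ => ee r₃ (X i₁) (X j₁) * ee r₄ (X j₁) (X k₁) :=
    ((measurable_ee r₃).comp (f := fun X : Fin n → ℝ => (X i₁, X j₁))
      ((measurable_pi_apply i₁).prodMk (measurable_pi_apply j₁))).mul
    ((measurable_ee r₄).comp (f := fun X : Fin n → ℝ => (X j₁, X k₁))
      ((measurable_pi_apply j₁).prodMk (measurable_pi_apply k₁)))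
  have hbf : ∀ X : Fin n → ℝ, |ee r₁ (X i) (X j) * ee r₂ (X j) (X k)| ≤ 1 :=
    fun X => abs_mul_le_one (ee_abs_le _ _ _) (ee_abs_le _ _ _)
  have hbg : ∀ X : Fin n → ℝ, |ee r₃ (X i₁) (X j₁) * ee r₄ (X j₁) (X k₁)| ≤ 1 :=
    fun X => abs_mul_le_one (ee_abs_le _ _ _) (ee_abs_le _ _ _)
  have hIf : Integrable (fun X : Fin n → ℝ => ee r₁ (X i) (X j) * ee r₂ (X j) (X k))
      (gbmMeasure n) := integrable_of_bdd hmf hbf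
  have hIg : Integrable (fun X : Fin n → ℝ => ee r₃ (X i₁) (X j₁) * ee r₄ (X j₁) (X k₁))
      (gbmMeasure n) := integrable_of_bdd hmg hbg
  have hIfg : Integrable (fun X : Fin n → ℝ =>
      (ee r₁ (X i) (X j) * ee r₂ (X j) (X k)) * (ee r₃ (X i₁) (X j₁) * ee r₄ (X j₁) (X k₁)))
      (gbmMeasure n) :=
    integrable_of_bdd (hmf.mul hmg) (fun X => abs_mul_le_one (hbf X) (hbg X))
  have hEf : ∫ X, ee r₁ (X i) (X j) * ee r₂ (X j) (X k) ∂gbmMeasure n = (2*r₁) * (2*r₂) :=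
    ML_single hij hik hjk (sh1 r₁ r₂) (msh1 _ _) (bsh1 _ _)
      (slicew1 hr₁0 hr₁4 hr₂0 hr₂4)
  have hEg : ∫ X, ee r₃ (X i₁) (X j₁) * ee r₄ (X j₁) (X k₁) ∂gbmMeasure n = (2*r₃) * (2*r₄) :=
    ML_single hij₁ hik₁ hjk₁ (sh1 r₃ r₄) (msh1 _ _) (bsh1 _ _)
      (slicew1 hr₃0 hr₃4 hr₄0 hr₄4)
  have hfg : ∫ X, (ee r₁ (X i) (X j) * ee r₂ (X j) (X k))
        * (ee r₃ (X i₁) (X j₁) * ee r₄ (X j₁) (X k₁)) ∂gbmMeasure n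
      = ((2*r₁) * (2*r₂)) * ((2*r₃) * (2*r₄)) := by
    have w1 := slicew1 hr₁0 hr₁4 hr₂0 hr₂4
    have w1' := slicew1 hr₃0 hr₃4 hr₄0 hr₄4
    have w2 := slicew2 hr₁0 hr₁4 hr₂0 hr₂4
    have w2' := slicew2 hr₃0 hr₃4 hr₄0 hr₄4
    have w3 := slicew3 hr₁0 hr₁4 hr₂0 hr₂4
    have w3' := slicew3 hr₃0 hr₃4 hr₄0 hr₄4
    by_cases hvide : (({i, j, k} : Finset (Fin n)) ∩ ({i₁, j₁, k₁} : Finset (Fin n))) = ∅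
    · -- disjoint triples
      have hcr : ∀ w w', w ∈ ({i,j,k} : Finset (Fin n)) → w' ∈ ({i₁,j₁,k₁} : Finset (Fin n))
          → w ≠ w' := by
        intro w w' h1 h2 he
        have hmm : w ∈ (({i,j,k} : Finset (Fin n)) ∩ ({i₁,j₁,k₁} : Finset (Fin n))) :=
          Finset.mem_inter.2 ⟨h1, he ▸ h2⟩
        rw [hvide] at hmm
        exact absurd hmm (Finset.notMem_empty w)
      exact ML_pair6 hij hik
        (hcr i i₁ (by simp) (by simp)) (hcr i j₁ (by simp) (by simp))
        (hcr i k₁ (by simp) (by simp)) hjk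
        (hcr j i₁ (by simp) (by simp)) (hcr j j₁ (by simp) (by simp))
        (hcr j k₁ (by simp) (by simp))
        (hcr k i₁ (by simp) (by simp)) (hcr k j₁ (by simp) (by simp))
        (hcr k k₁ (by simp) (by simp)) hij₁ hik₁ hjk₁
        (sh1 r₁ r₂) (sh1 r₃ r₄) (msh1 _ _) (msh1 _ _) (bsh1 _ _) (bsh1 _ _) w1 w1'
    · -- exactly one shared vertex
      obtain ⟨v, hv⟩ := Finset.nonempty_iff_ne_empty.2 hvide
      have hcr : ∀ w w', w ∈ ({i,j,k} : Finset (Fin n)) → w' ∈ ({i₁,j₁,k₁} : Finset (Fin n))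
          → w = w' → w = v := fun w w' h1 h2 he =>
        Finset.card_le_one.1 hshare w (Finset.mem_inter.2 ⟨h1, he ▸ h2⟩) v hv
      have hvs := (Finset.mem_inter.1 hv).1
      have hvt := (Finset.mem_inter.1 hv).2
      simp only [Finset.mem_insert, Finset.mem_singleton] at hvs hvt
      rcases hvs with rfl | rfl | rfl
      · -- v = i
        rcases hvt with h | h | h
        · subst h
          exact ML_pair5 hij hik hij₁ hik₁ hjk
            (fun he => hij (hcr j j₁ (by simp) (by simp) he).symm)
            (fun he => hij (hcr j k₁ (by simp) (by simp) he).symm)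
            (fun he => hik (hcr k j₁ (by simp) (by simp) he).symm)
            (fun he => hik (hcr k k₁ (by simp) (by simp) he).symm)
            hjk₁ (sh1 r₁ r₂) (sh1 r₃ r₄) (msh1 _ _) (msh1 _ _) (bsh1 _ _) (bsh1 _ _) w1 w1'
        · subst h
          exact ML_pair5 hij hik (Ne.symm hij₁) hjk₁ hjk
            (fun he => hij (hcr j i₁ (by simp) (by simp) he).symm)
            (fun he => hij (hcr j k₁ (by simp) (by simp) he).symm)
            (fun he => hik (hcr k i₁ (by simp) (by simp) he).symm)
            (fun he => hik (hcr k k₁ (by simp) (by simp) he).symm)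
            hik₁ (sh1 r₁ r₂) (sh2 r₃ r₄) (msh1 _ _) (msh2 _ _) (bsh1 _ _) (bsh2 _ _) w1 w2'
        · subst h
          exact ML_pair5 hij hik (Ne.symm hik₁) (Ne.symm hjk₁) hjk
            (fun he => hij (hcr j i₁ (by simp) (by simp) he).symm)
            (fun he => hij (hcr j j₁ (by simp) (by simp) he).symm)
            (fun he => hik (hcr k i₁ (by simp) (by simp) he).symm)
            (fun he => hik (hcr k j₁ (by simp) (by simp) he).symm)
            hij₁ (sh1 r₁ r₂) (sh3 r₃ r₄) (msh1 _ _) (msh3 _ _) (bsh1 _ _) (bsh3 _ _) w1 w3'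
      · -- v = j
        rcases hvt with h | h | h
        · subst h
          exact ML_pair5 (Ne.symm hij) hjk hij₁ hik₁ hik
            (fun he => hij (hcr i j₁ (by simp) (by simp) he))
            (fun he => hij (hcr i k₁ (by simp) (by simp) he))
            (fun he => hjk (hcr k j₁ (by simp) (by simp) he).symm)
            (fun he => hjk (hcr k k₁ (by simp) (by simp) he).symm)
            hjk₁ (sh2 r₁ r₂) (sh1 r₃ r₄) (msh2 _ _) (msh1 _ _) (bsh2 _ _) (bsh1 _ _) w2 w1'
        · subst h
          exact ML_pair5 (Ne.symm hij) hjk (Ne.symm hij₁) hjk₁ hik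
            (fun he => hij (hcr i i₁ (by simp) (by simp) he))
            (fun he => hij (hcr i k₁ (by simp) (by simp) he))
            (fun he => hjk (hcr k i₁ (by simp) (by simp) he).symm)
            (fun he => hjk (hcr k k₁ (by simp) (by simp) he).symm)
            hik₁ (sh2 r₁ r₂) (sh2 r₃ r₄) (msh2 _ _) (msh2 _ _) (bsh2 _ _) (bsh2 _ _) w2 w2'
        · subst h
          exact ML_pair5 (Ne.symm hij) hjk (Ne.symm hik₁) (Ne.symm hjk₁) hik
            (fun he => hij (hcr i i₁ (by simp) (by simp) he))
            (fun he => hij (hcr i j₁ (by simp) (by simp) he))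
            (fun he => hjk (hcr k i₁ (by simp) (by simp) he).symm)
            (fun he => hjk (hcr k j₁ (by simp) (by simp) he).symm)
            hij₁ (sh2 r₁ r₂) (sh3 r₃ r₄) (msh2 _ _) (msh3 _ _) (bsh2 _ _) (bsh3 _ _) w2 w3'
      · -- v = k
        rcases hvt with h | h | h
        · subst h
          exact ML_pair5 (Ne.symm hik) (Ne.symm hjk) hij₁ hik₁ hij
            (fun he => hik (hcr i j₁ (by simp) (by simp) he))
            (fun he => hik (hcr i k₁ (by simp) (by simp) he))
            (fun he => hjk (hcr j j₁ (by simp) (by simp) he))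
            (fun he => hjk (hcr j k₁ (by simp) (by simp) he))
            hjk₁ (sh3 r₁ r₂) (sh1 r₃ r₄) (msh3 _ _) (msh1 _ _) (bsh3 _ _) (bsh1 _ _) w3 w1'
        · subst h
          exact ML_pair5 (Ne.symm hik) (Ne.symm hjk) (Ne.symm hij₁) hjk₁ hij
            (fun he => hik (hcr i i₁ (by simp) (by simp) he))
            (fun he => hik (hcr i k₁ (by simp) (by simp) he))
            (fun he => hjk (hcr j i₁ (by simp) (by simp) he))
            (fun he => hjk (hcr j k₁ (by simp) (by simp) he))
            hik₁ (sh3 r₁ r₂) (sh2 r₃ r₄) (msh3 _ _) (msh2 _ _) (bsh3 _ _) (bsh2 _ _) w3 w2'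
        · subst h
          exact ML_pair5 (Ne.symm hik) (Ne.symm hjk) (Ne.symm hik₁) (Ne.symm hjk₁) hij
            (fun he => hik (hcr i i₁ (by simp) (by simp) he))
            (fun he => hik (hcr i j₁ (by simp) (by simp) he))
            (fun he => hjk (hcr j i₁ (by simp) (by simp) he))
            (fun he => hjk (hcr j j₁ (by simp) (by simp) he))
            hij₁ (sh3 r₁ r₂) (sh3 r₃ r₄) (msh3 _ _) (msh3 _ _) (bsh3 _ _) (bsh3 _ _) w3 w3'
  exact centered_core (ν := gbmMeasure n) (cf := 2 * r₁ * (2 * r₂)) (cg := 2 * r₃ * (2 * r₄))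
    (fun X => ee r₁ (X i) (X j) * ee r₂ (X j) (X k))
    (fun X => ee r₃ (X i₁) (X j₁) * ee r₄ (X j₁) (X k₁)) hIf hIg hIfg hEf hEg hfg
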